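/- arXiv:2102.11854 — 3 statements merged into one kernel-verified Lean document; each statement's English description precedes it below -/
import Mathlib

section
/- Let f : {0,1}^{2n} → {0,1} and f' : {0,1}^{2n-1} → {0,1} be monotone Boolean functions such that f' is the minor of f with respect to π₁ : [2n] → [2n-1] defined by π₁(i) = max(i-1, 1) (identifying the first two coordinates of f). If Φ_f(1) ≥ λ, then Φ_{f'}(1) ≥ λ/2. -/
open Finset

/-- A Boolean function on subsets of `Fin m` is monotone. -/
def MonotoneB {m : ℕ} (f : Finset (Fin m) → Bool) : Prop :=
  ∀ S T : Finset (Fin m), S ⊆ T → f S = true → f T = true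

/-- The boundary of coordinate `i`: sets `S` not containing `i` with
`f (S ∪ {i}) = 1` and `f S = 0`. -/
def boundary {m : ℕ} (f : Finset (Fin m) → Bool) (i : Fin m) : Finset (Finset (Fin m)) :=
  Finset.univ.filter (fun S => i ∉ S ∧ f (insert i S) = true ∧ f S = false)

/-- `mu f i j` : the fraction of size-`j` subsets of `[m] \ {i}` lying in the
boundary of coordinate `i`. -/
def mu {m : ℕ} (f : Finset (Fin m) → Bool) (i : Fin m) (j : ℕ) : ℚ :=
  (((boundary f i).filter (fun S => S.card = j)).card : ℚ) / (((m - 1).choose j : ℕ) : ℚ)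

/-- The Shapley value of coordinate `i` of `f` : the probability over a uniformly
random permutation `σ` that `i` is the pivotal coordinate on the increasing path
`∅ = P₀ ⊂ P₁ ⊂ ⋯ ⊂ Pₘ = univ` given by `σ`. -/
def shapley {m : ℕ} (f : Finset (Fin m) → Bool) (i : Fin m) : ℚ :=
  (((Finset.univ : Finset (Equiv.Perm (Fin m))).filter (fun σ =>
    ∃ j : Fin m, σ j = i ∧
      f ((Finset.univ.filter (fun k => k < j)).image (fun k => σ k)) = false ∧
      f ((Finset.univ.filter (fun k => k ≤ j)).image (fun k => σ k)) = true)).card : ℚ)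
    / ((Nat.factorial m : ℕ) : ℚ)

/-- `g` is the minor of `f` with respect to `π`. -/
def minorOf {m k : ℕ} (g : Finset (Fin k) → Bool) (f : Finset (Fin m) → Bool)
    (π : Fin m → Fin k) : Prop :=
  ∀ S : Finset (Fin k), g S = f (Finset.univ.filter (fun i => π i ∈ S))

/-- The minor of `f` with respect to `π`, as a function. -/
def minorFun {m k : ℕ} (f : Finset (Fin m) → Bool) (π : Fin m → Fin k) :
    Finset (Fin k) → Bool :=
  fun S => f (Finset.univ.filter (fun i => π i ∈ S))

/-- The map `π₁ : [2n] → [2n-1]` identifying the first two coordinates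
(`π₁(i) = max(i-1,1)` in 1-indexed notation). -/
def pi1 (n : ℕ) (hn : 0 < n) : Fin (2*n) → Fin (2*n-1) :=
  fun i => ⟨i.val - 1, by have := i.isLt; omega⟩


section Aux
variable {n : ℕ}

private lemma two_n_pos (hn : 0 < n) : 0 < 2*n := by omega

private lemma two_n_sub_pos (hn : 0 < n) : 0 < 2*n-1 := by omega

private def unskip (hn : 0 < n) (p : Fin (2*n)) (k : Fin (2*n-1)) : Fin (2*n) :=
  if k.val < p.val then ⟨k.val, by have := k.isLt; omega⟩
  else ⟨k.val + 1, by have := k.isLt; omega⟩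

private lemma unskip_val (hn : 0 < n) (p : Fin (2*n)) (k : Fin (2*n-1)) :
    (unskip hn p k).val = if k.val < p.val then k.val else k.val + 1 := by
  unfold unskip; split <;> rfl

private lemma unskip_ne (hn : 0 < n) (p : Fin (2*n)) (k : Fin (2*n-1)) :
    unskip hn p k ≠ p := by
  intro h
  have hv := congrArg Fin.val h
  rw [unskip_val] at hv
  split at hv <;> omega

private lemma unskip_lt_iff (hn : 0 < n) (p : Fin (2*n)) (k₁ k₂ : Fin (2*n-1)) :
    unskip hn p k₁ < unskip hn p k₂ ↔ k₁ < k₂ := by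
  rw [Fin.lt_def, Fin.lt_def, unskip_val, unskip_val]
  split <;> split <;> omega

private lemma unskip_le_iff (hn : 0 < n) (p : Fin (2*n)) (k₁ k₂ : Fin (2*n-1)) :
    unskip hn p k₁ ≤ unskip hn p k₂ ↔ k₁ ≤ k₂ := by
  rw [Fin.le_def, Fin.le_def, unskip_val, unskip_val]
  split <;> split <;> omega

private lemma unskip_inj (hn : 0 < n) (p : Fin (2*n)) :
    Function.Injective (unskip hn p) := by
  intro k₁ k₂ h
  have hv := congrArg Fin.val h
  rw [unskip_val, unskip_val] at hv
  apply Fin.ext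
  split at hv <;> split at hv <;> omega

private lemma unskip_surj (hn : 0 < n) (p : Fin (2*n)) (x : Fin (2*n)) (hx : x ≠ p) :
    ∃ k, unskip hn p k = x := by
  have hxv : x.val ≠ p.val := fun h => hx (Fin.ext h)
  have hpl := p.isLt
  have hxl := x.isLt
  by_cases h : x.val < p.val
  · refine ⟨⟨x.val, by omega⟩, ?_⟩
    apply Fin.ext
    rw [unskip_val]
    split <;> simp_all
  · refine ⟨⟨x.val - 1, by omega⟩, ?_⟩
    apply Fin.ext
    rw [unskip_val]
    split <;> simp_all <;> omega

private lemma unskip_image_lt (hn : 0 < n) (p : Fin (2*n)) (j' : Fin (2*n-1)) :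
    (Finset.univ.filter (fun k => k < j')).image (unskip hn p)
      = Finset.univ.filter (fun x => x < unskip hn p j' ∧ x ≠ p) := by
  ext x
  simp only [mem_image, mem_filter, mem_univ, true_and]
  constructor
  · rintro ⟨k, hk, rfl⟩
    exact ⟨(unskip_lt_iff hn p k j').2 hk, unskip_ne hn p k⟩
  · rintro ⟨hlt, hne⟩
    obtain ⟨k, rfl⟩ := unskip_surj hn p x hne
    exact ⟨k, (unskip_lt_iff hn p k j').1 hlt, rfl⟩

private lemma unskip_image_le (hn : 0 < n) (p : Fin (2*n)) (j' : Fin (2*n-1)) :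
    (Finset.univ.filter (fun k => k ≤ j')).image (unskip hn p)
      = Finset.univ.filter (fun x => x ≤ unskip hn p j' ∧ x ≠ p) := by
  ext x
  simp only [mem_image, mem_filter, mem_univ, true_and]
  constructor
  · rintro ⟨k, hk, rfl⟩
    exact ⟨(unskip_le_iff hn p k j').2 hk, unskip_ne hn p k⟩
  · rintro ⟨hle, hne⟩
    obtain ⟨k, rfl⟩ := unskip_surj hn p x hne
    exact ⟨k, (unskip_le_iff hn p k j').1 hle, rfl⟩

private lemma pi1_inj (hn : 0 < n) {a b : Fin (2*n)} (ha : a.val ≠ 1) (hb : b.val ≠ 1)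
    (h : pi1 n hn a = pi1 n hn b) : a = b := by
  have hv : a.val - 1 = b.val - 1 := congrArg Fin.val h
  apply Fin.ext
  omega

private def pOf (hn : 0 < n) (σ : Equiv.Perm (Fin (2*n))) : Fin (2*n) :=
  σ.symm ⟨1, by omega⟩

private lemma sigma_pOf (hn : 0 < n) (σ : Equiv.Perm (Fin (2*n))) :
    σ (pOf hn σ) = ⟨1, by omega⟩ :=
  σ.apply_symm_apply _

private lemma sigma_ne_one (hn : 0 < n) (σ : Equiv.Perm (Fin (2*n))) {x : Fin (2*n)}
    (hx : x ≠ pOf hn σ) : (σ x).val ≠ 1 := by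
  intro h
  apply hx
  have h1 : σ x = ⟨1, by omega⟩ := Fin.ext h
  simp [pOf, ← h1]

private def gmap (hn : 0 < n) (σ : Equiv.Perm (Fin (2*n))) (k : Fin (2*n-1)) :
    Fin (2*n-1) :=
  pi1 n hn (σ (unskip hn (pOf hn σ) k))

private lemma gmap_inj (hn : 0 < n) (σ : Equiv.Perm (Fin (2*n))) :
    Function.Injective (gmap hn σ) := by
  intro k₁ k₂ h
  have h1 := pi1_inj hn (sigma_ne_one hn σ (unskip_ne hn _ k₁))
    (sigma_ne_one hn σ (unskip_ne hn _ k₂)) h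
  exact unskip_inj hn _ (σ.injective h1)

private noncomputable def permD (hn : 0 < n) (σ : Equiv.Perm (Fin (2*n))) : Equiv.Perm (Fin (2*n-1)) :=
  Equiv.ofBijective _ (Finite.injective_iff_bijective.mp (gmap_inj hn σ))

private lemma permD_apply (hn : 0 < n) (σ : Equiv.Perm (Fin (2*n))) (k : Fin (2*n-1)) :
    permD hn σ k = gmap hn σ k := rfl

private lemma preim_pi1_of_not_mem (hn : 0 < n) (T : Finset (Fin (2*n)))
    (h1 : (⟨1, by omega⟩ : Fin (2*n)) ∉ T) (h0 : (⟨0, two_n_pos hn⟩ : Fin (2*n)) ∉ T) :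
    Finset.univ.filter (fun c => pi1 n hn c ∈ T.image (pi1 n hn)) = T := by
  ext c
  simp only [mem_filter, mem_univ, true_and, mem_image]
  constructor
  · rintro ⟨t, ht, hpt⟩
    have hv : t.val - 1 = c.val - 1 := congrArg Fin.val hpt
    have ht1 : t.val ≠ 1 := fun h => h1 ((Fin.ext h : t = ⟨1, by omega⟩) ▸ ht)
    have ht0 : t.val ≠ 0 := fun h => h0 ((Fin.ext h : t = ⟨0, two_n_pos hn⟩) ▸ ht)
    have : c = t := Fin.ext (by omega)
    rwa [this]
  · intro hc
    exact ⟨c, hc, rfl⟩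

private lemma preim_pi1_of_mem (hn : 0 < n) (T : Finset (Fin (2*n)))
    (h1 : (⟨1, by omega⟩ : Fin (2*n)) ∉ T) (h0 : (⟨0, two_n_pos hn⟩ : Fin (2*n)) ∈ T) :
    Finset.univ.filter (fun c => pi1 n hn c ∈ T.image (pi1 n hn))
      = insert (⟨1, by omega⟩ : Fin (2*n)) T := by
  ext c
  simp only [mem_filter, mem_univ, true_and, mem_image, mem_insert]
  constructor
  · rintro ⟨t, ht, hpt⟩
    have hv : t.val - 1 = c.val - 1 := congrArg Fin.val hpt
    have ht1 : t.val ≠ 1 := fun h => h1 ((Fin.ext h : t = ⟨1, by omega⟩) ▸ ht)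
    by_cases hc1 : c.val = 1
    · exact Or.inl (Fin.ext hc1)
    · right
      by_cases ht0 : t.val = 0
      · have hc0 : c.val = 0 := by omega
        have : c = (⟨0, two_n_pos hn⟩ : Fin (2*n)) := Fin.ext hc0
        rwa [this]
      · have : c = t := Fin.ext (by omega)
        rwa [this]
  · rintro (rfl | hc)
    · refine ⟨⟨0, two_n_pos hn⟩, h0, ?_⟩
      apply Fin.ext
      show (0 : ℕ) - 1 = 1 - 1
      rfl
    · exact ⟨c, hc, rfl⟩

private lemma pivot_transfer (hn : 0 < n) (f : Finset (Fin (2*n)) → Bool)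
    (f' : Finset (Fin (2*n-1)) → Bool) (hf : MonotoneB f)
    (hminor : minorOf f' f (pi1 n hn)) (σ : Equiv.Perm (Fin (2*n)))
    (j : Fin (2*n)) (hj : σ j = ⟨0, two_n_pos hn⟩)
    (hlt : f ((Finset.univ.filter (fun k => k < j)).image (fun k => σ k)) = false)
    (hle : f ((Finset.univ.filter (fun k => k ≤ j)).image (fun k => σ k)) = true) :
    ∃ j' : Fin (2*n-1), permD hn σ j' = ⟨0, two_n_sub_pos hn⟩ ∧
      f' ((Finset.univ.filter (fun k => k < j')).image (fun k => permD hn σ k)) = false ∧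
      f' ((Finset.univ.filter (fun k => k ≤ j')).image (fun k => permD hn σ k)) = true := by
  set p := pOf hn σ with hp
  have hjp : j ≠ p := by
    intro h
    have : σ p = ⟨1, by omega⟩ := sigma_pOf hn σ
    rw [h, this] at hj
    exact absurd (congrArg Fin.val hj) (by simp)
  obtain ⟨j', hj'⟩ := unskip_surj hn p j hjp
  refine ⟨j', ?_, ?_, ?_⟩
  · rw [permD_apply]
    unfold gmap
    rw [← hp, hj', hj]
    apply Fin.ext
    show (0 : ℕ) - 1 = 0
    rfl
  · -- the < case
    have e1 : (Finset.univ.filter (fun k => k < j')).image (fun k => permD hn σ k)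
        = ((Finset.univ.filter (fun x => x < j ∧ x ≠ p)).image (fun x => σ x)).image
            (pi1 n hn) := by
      rw [← hj', ← unskip_image_lt hn p j', Finset.image_image, Finset.image_image]
      rfl
    set T := (Finset.univ.filter (fun x => x < j ∧ x ≠ p)).image (fun x => σ x) with hT
    have h1T : (⟨1, by omega⟩ : Fin (2*n)) ∉ T := by
      rw [hT]
      simp only [mem_image, mem_filter, mem_univ, true_and, not_exists]
      rintro x ⟨hx, hxe⟩
      exact sigma_ne_one hn σ hx.2 (congrArg Fin.val hxe)
    have h0T : (⟨0, two_n_pos hn⟩ : Fin (2*n)) ∉ T := by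
      rw [hT]
      simp only [mem_image, mem_filter, mem_univ, true_and, not_exists]
      rintro x ⟨hx, hxe⟩
      have hxj : x = j := σ.injective (hxe.trans hj.symm)
      rw [hxj] at hx
      exact lt_irrefl _ hx.1
    rw [e1, hminor, preim_pi1_of_not_mem hn T h1T h0T]
    have hsub : T ⊆ (Finset.univ.filter (fun k => k < j)).image (fun k => σ k) := by
      apply Finset.image_subset_image
      intro x hx
      simp only [mem_filter, mem_univ, true_and] at hx ⊢
      exact hx.1
    cases hfT : f T with
    | false => rfl
    | true =>
      have := hf T _ hsub hfT
      rw [hlt] at this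
      exact absurd this (by simp)
  · -- the ≤ case
    have e1 : (Finset.univ.filter (fun k => k ≤ j')).image (fun k => permD hn σ k)
        = ((Finset.univ.filter (fun x => x ≤ j ∧ x ≠ p)).image (fun x => σ x)).image
            (pi1 n hn) := by
      rw [← hj', ← unskip_image_le hn p j', Finset.image_image, Finset.image_image]
      rfl
    set T := (Finset.univ.filter (fun x => x ≤ j ∧ x ≠ p)).image (fun x => σ x) with hT
    have h1T : (⟨1, by omega⟩ : Fin (2*n)) ∉ T := by
      rw [hT]
      simp only [mem_image, mem_filter, mem_univ, true_and, not_exists]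
      rintro x ⟨hx, hxe⟩
      exact sigma_ne_one hn σ hx.2 (congrArg Fin.val hxe)
    have h0T : (⟨0, two_n_pos hn⟩ : Fin (2*n)) ∈ T := by
      rw [hT]
      simp only [mem_image, mem_filter, mem_univ, true_and]
      exact ⟨j, ⟨le_refl j, hjp⟩, hj⟩
    rw [e1, hminor, preim_pi1_of_mem hn T h1T h0T]
    have hsub : (Finset.univ.filter (fun k => k ≤ j)).image (fun k => σ k)
        ⊆ insert (⟨1, by omega⟩ : Fin (2*n)) T := by
      intro y hy
      simp only [mem_image, mem_filter, mem_univ, true_and] at hy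
      obtain ⟨x, hx, rfl⟩ := hy
      by_cases hxp : x = p
      · rw [hxp, sigma_pOf hn σ]
        exact mem_insert_self _ _
      · apply mem_insert_of_mem
        rw [hT]
        simp only [mem_image, mem_filter, mem_univ, true_and]
        exact ⟨x, ⟨hx, hxp⟩, rfl⟩
    exact hf _ _ hsub hle

end Aux

private lemma card_pivot_le {n : ℕ} (hn : 0 < n) (f : Finset (Fin (2*n)) → Bool)
    (f' : Finset (Fin (2*n-1)) → Bool) (hf : MonotoneB f)
    (hminor : minorOf f' f (pi1 n hn)) :
    ((Finset.univ : Finset (Equiv.Perm (Fin (2*n)))).filter (fun σ =>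
      ∃ j : Fin (2*n), σ j = ⟨0, two_n_pos hn⟩ ∧
        f ((Finset.univ.filter (fun k => k < j)).image (fun k => σ k)) = false ∧
        f ((Finset.univ.filter (fun k => k ≤ j)).image (fun k => σ k)) = true)).card
    ≤ ((Finset.univ : Finset (Equiv.Perm (Fin (2*n-1)))).filter (fun σ =>
      ∃ j : Fin (2*n-1), σ j = ⟨0, two_n_sub_pos hn⟩ ∧
        f' ((Finset.univ.filter (fun k => k < j)).image (fun k => σ k)) = false ∧
        f' ((Finset.univ.filter (fun k => k ≤ j)).image (fun k => σ k)) = true)).card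
      * (2*n) := by
  classical
  set A := ((Finset.univ : Finset (Equiv.Perm (Fin (2*n)))).filter (fun σ =>
      ∃ j : Fin (2*n), σ j = ⟨0, two_n_pos hn⟩ ∧
        f ((Finset.univ.filter (fun k => k < j)).image (fun k => σ k)) = false ∧
        f ((Finset.univ.filter (fun k => k ≤ j)).image (fun k => σ k)) = true)) with hA
  set A' := ((Finset.univ : Finset (Equiv.Perm (Fin (2*n-1)))).filter (fun σ =>
      ∃ j : Fin (2*n-1), σ j = ⟨0, two_n_sub_pos hn⟩ ∧
        f' ((Finset.univ.filter (fun k => k < j)).image (fun k => σ k)) = false ∧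
        f' ((Finset.univ.filter (fun k => k ≤ j)).image (fun k => σ k)) = true)) with hA'
  have hle : A.card ≤ (A' ×ˢ (Finset.univ : Finset (Fin (2*n)))).card := by
    apply Finset.card_le_card_of_injOn (fun σ => (permD hn σ, pOf hn σ))
    · intro σ hσ
      rw [hA] at hσ
      simp only [Finset.mem_coe, mem_filter, mem_univ, true_and] at hσ
      obtain ⟨j, hj, hltf, hlef⟩ := hσ
      rw [Finset.mem_coe, Finset.mem_product]
      refine ⟨?_, mem_univ _⟩
      rw [hA']
      simp only [mem_filter, mem_univ, true_and]
      exact pivot_transfer hn f f' hf hminor σ j hj hltf hlef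
    · intro σ₁ _ σ₂ _ h
      have h1 : permD hn σ₁ = permD hn σ₂ := congrArg Prod.fst h
      have h2 : pOf hn σ₁ = pOf hn σ₂ := congrArg Prod.snd h
      apply Equiv.ext
      intro x
      by_cases hx : x = pOf hn σ₁
      · rw [hx, sigma_pOf hn σ₁, h2, sigma_pOf hn σ₂]
      · obtain ⟨k, hk⟩ := unskip_surj hn (pOf hn σ₁) x hx
        have hg : gmap hn σ₁ k = gmap hn σ₂ k := by
          rw [← permD_apply, ← permD_apply, h1]
        unfold gmap at hg
        rw [← h2, hk] at hg
        have hx2 : x ≠ pOf hn σ₂ := by rw [← h2]; exact hx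
        exact pi1_inj hn (sigma_ne_one hn σ₁ hx) (sigma_ne_one hn σ₂ hx2) hg
  calc A.card ≤ (A' ×ˢ (Finset.univ : Finset (Fin (2*n)))).card := hle
    _ = A'.card * (2*n) := by
        rw [Finset.card_product, Finset.card_univ, Fintype.card_fin]

private lemma div_fact_le (n a b : ℕ) (hn : 0 < n) (h : a ≤ b * (2*n)) :
    ((a : ℕ) : ℚ) / ((Nat.factorial (2*n) : ℕ) : ℚ)
      ≤ ((b : ℕ) : ℚ) / ((Nat.factorial (2*n-1) : ℕ) : ℚ) := by
  have hfact : Nat.factorial (2*n) = (2*n) * Nat.factorial (2*n-1) := by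
    obtain ⟨m, hm⟩ : ∃ m, 2*n = m+1 := ⟨2*n-1, by omega⟩
    rw [hm]
    simp [Nat.factorial_succ]
  have hpos1 : (0:ℚ) < ((Nat.factorial (2*n) : ℕ) : ℚ) := by
    exact_mod_cast Nat.factorial_pos _
  have hpos2 : (0:ℚ) < ((Nat.factorial (2*n-1) : ℕ) : ℚ) := by
    exact_mod_cast Nat.factorial_pos _
  rw [div_le_div_iff₀ hpos1 hpos2]
  have hnat : a * Nat.factorial (2*n-1) ≤ b * Nat.factorial (2*n) := by
    rw [hfact, ← Nat.mul_assoc]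
    exact Nat.mul_le_mul_right _ h
  exact_mod_cast hnat

/-- If `f'` is the minor of `f` identifying the first two coordinates and
coordinate 1 of `f` has Shapley value at least `λ`, then coordinate 1 of `f'`
has Shapley value at least `λ/2`. -/
theorem shapley_identify_minor (n : ℕ) (hn : 0 < n)
    (f : Finset (Fin (2*n)) → Bool) (f' : Finset (Fin (2*n-1)) → Bool)
    (hf : MonotoneB f) (hf' : MonotoneB f')
    (hminor : minorOf f' f (pi1 n hn)) (lam : ℚ)
    (hlam : lam ≤ shapley f ⟨0, by omega⟩) :
    lam / 2 ≤ shapley f' ⟨0, by omega⟩ := by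
  have hcard := card_pivot_le hn f f' hf hminor
  have key : shapley f ⟨0, by omega⟩ ≤ shapley f' ⟨0, by omega⟩ := by
    unfold shapley
    exact div_fact_le n _ _ hn hcard
  have hs0 : (0:ℚ) ≤ shapley f' ⟨0, by omega⟩ := by
    unfold shapley
    positivity
  have hs : lam ≤ shapley f' ⟨0, by omega⟩ := le_trans hlam key
  rcases le_or_gt 0 lam with h | h
  · linarith
  · linarith
end

section
/- For a monotone Boolean function f : {0,1}^{2n} → {0,1}, for each j ∈ [2n-2], the number of size-j sets in the boundary B_f(1) is at most C(2n-2, j)·μ'(j) + C(2n-2, j-1)·μ'(j-1), where μ'(k) is the fraction of size-k subsets of [2n-1]\{1} in the boundary B_{f'}(1) of the minor f' obtained by identifying coordinates 1 and 2. -/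
open Finset

section Aux
variable {n : ℕ} (hn : 1 ≤ n)

lemma aux_preimage (S : Finset (Fin (2*n))) (h0 : (⟨0, by omega⟩ : Fin (2*n)) ∉ S) :
    Finset.univ.filter (fun i => pi1 n hn i ∈ (S.erase ⟨1, by omega⟩).image (pi1 n hn))
      = S.erase ⟨1, by omega⟩ := by
  ext i
  simp only [mem_filter, mem_univ, true_and, mem_image, mem_erase, pi1, Fin.mk.injEq, ne_eq, Fin.val_mk,
    Fin.ext_iff]
  constructor
  · rintro ⟨a, ⟨ha1, haS⟩, hval⟩
    have ha0 : a.val ≠ 0 := fun h => h0 (by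
      have : a = ⟨0, by omega⟩ := Fin.ext h
      rwa [this] at haS)
    have : a = i := Fin.ext (by omega)
    subst this
    exact ⟨by omega, haS⟩
  · rintro ⟨hi1, hiS⟩
    exact ⟨i, ⟨hi1, hiS⟩, rfl⟩

lemma aux_preimage_insert (S : Finset (Fin (2*n))) (h0 : (⟨0, by omega⟩ : Fin (2*n)) ∉ S) :
    Finset.univ.filter (fun i => pi1 n hn i ∈
        insert (⟨0, by omega⟩ : Fin (2*n-1)) ((S.erase ⟨1, by omega⟩).image (pi1 n hn)))
      = insert ⟨0, by omega⟩ (insert ⟨1, by omega⟩ S) := by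
  ext i
  simp only [mem_filter, mem_univ, true_and, mem_insert, mem_image, mem_erase, pi1,
    Fin.mk.injEq, ne_eq, Fin.val_mk, Fin.ext_iff]
  constructor
  · rintro (h | ⟨a, ⟨ha1, haS⟩, hval⟩)
    · omega
    · have ha0 : a.val ≠ 0 := fun h => h0 (by
        have : a = ⟨0, by omega⟩ := Fin.ext h
        rwa [this] at haS)
      have : a = i := Fin.ext (by omega)
      subst this
      right; right; exact haS
  · rintro (h | h | hiS)
    · left; omega
    · left; omega
    · by_cases h1 : i.val = 1
      · left; omega
      · right
        exact ⟨i, ⟨by omega, hiS⟩, rfl⟩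

end Aux

section Aux2
variable {n : ℕ} (hn : 1 ≤ n)

lemma val_ne_zero_of_mem {S : Finset (Fin (2*n))} (h0 : (⟨0, by omega⟩ : Fin (2*n)) ∉ S)
    {a : Fin (2*n)} (ha : a ∈ S) : a.val ≠ 0 :=
  fun hv => h0 (by have : a = ⟨0, by omega⟩ := Fin.ext hv; rwa [this] at ha)

lemma pi1_injOn {S : Finset (Fin (2*n))} (h0 : (⟨0, by omega⟩ : Fin (2*n)) ∉ S) :
    Set.InjOn (pi1 n hn) (S.erase ⟨1, by omega⟩ : Finset (Fin (2*n))) := by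
  intro a ha b hb hab
  simp only [coe_erase, Set.mem_diff, mem_coe, Set.mem_singleton_iff] at ha hb
  have ha0 := val_ne_zero_of_mem hn h0 ha.1
  have hb0 := val_ne_zero_of_mem hn h0 hb.1
  have ha1 : a.val ≠ 1 := fun hv => ha.2 (Fin.ext hv)
  have hb1 : b.val ≠ 1 := fun hv => hb.2 (Fin.ext hv)
  have := congrArg Fin.val hab
  simp only [pi1] at this
  exact Fin.ext (by omega)

lemma phi_mem (f : Finset (Fin (2*n)) → Bool) (f' : Finset (Fin (2*n-1)) → Bool)
    (hf : MonotoneB f) (hminor : minorOf f' f (pi1 n hn))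
    (S : Finset (Fin (2*n))) (hS : S ∈ boundary f ⟨0, by omega⟩) :
    (S.erase ⟨1, by omega⟩).image (pi1 n hn) ∈ boundary f' ⟨0, by omega⟩ := by
  simp only [boundary, mem_filter, mem_univ, true_and] at hS ⊢
  obtain ⟨h0, h1, h2⟩ := hS
  refine ⟨?_, ?_, ?_⟩
  · simp only [mem_image, mem_erase, not_exists]
    rintro a ⟨⟨ha1, haS⟩, hval⟩
    have ha0 := val_ne_zero_of_mem hn h0 haS
    have ha1' : a.val ≠ 1 := fun hv => ha1 (Fin.ext hv)
    have := congrArg Fin.val hval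
    simp only [pi1] at this
    omega
  · rw [hminor, aux_preimage_insert hn S h0]
    refine hf _ _ ?_ h1
    intro x hx
    simp only [mem_insert] at hx ⊢
    tauto
  · rw [hminor, aux_preimage hn S h0]
    cases hfe : f (S.erase ⟨1, by omega⟩) with
    | false => rfl
    | true => exact absurd (hf _ _ (erase_subset _ _) hfe) (by simp [h2])

lemma count_le (f : Finset (Fin (2*n)) → Bool) (f' : Finset (Fin (2*n-1)) → Bool)
    (hf : MonotoneB f) (hminor : minorOf f' f (pi1 n hn)) (j : ℕ) (hj : 1 ≤ j) :
    ((boundary f ⟨0, by omega⟩).filter (fun S => S.card = j)).card ≤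
      ((boundary f' ⟨0, by omega⟩).filter (fun S => S.card = j)).card +
      ((boundary f' ⟨0, by omega⟩).filter (fun S => S.card = j-1)).card := by
  classical
  set P := (boundary f ⟨0, by omega⟩).filter (fun S => S.card = j) with hP
  have hsplit : (P.filter (fun S => (⟨1, by omega⟩ : Fin (2*n)) ∉ S)).card
      + (P.filter (fun S => ¬ (⟨1, by omega⟩ : Fin (2*n)) ∉ S)).card = P.card :=
    Finset.card_filter_add_card_filter_not _
  rw [← hsplit]
  have hbd : ∀ S ∈ P, S ∈ boundary f ⟨0, by omega⟩ ∧ S.card = j := by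
    intro S hS; rw [hP, mem_filter] at hS; exact hS
  have h0mem : ∀ S ∈ P, (⟨0, by omega⟩ : Fin (2*n)) ∉ S := by
    intro S hS
    have := (hbd S hS).1
    simp only [boundary, mem_filter] at this
    exact this.2.1
  have herase : ∀ S ∈ P, ∀ T ∈ P,
      (S.erase ⟨1, by omega⟩).image (pi1 n hn) = (T.erase ⟨1, by omega⟩).image (pi1 n hn) →
      S.erase ⟨1, by omega⟩ = T.erase ⟨1, by omega⟩ := by
    intro S hS T hT h
    have e1 := aux_preimage hn S (h0mem S hS)
    have e2 := aux_preimage hn T (h0mem T hT)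
    rw [← e1, ← e2, h]
  gcongr
  · exact Finset.card_le_card_of_injOn (fun S => (S.erase ⟨1, by omega⟩).image (pi1 n hn))
      (by
        intro S hSm
        rw [mem_coe, mem_filter] at hSm ⊢
        obtain ⟨hSP, hS1⟩ := hSm
        refine ⟨phi_mem hn f f' hf hminor S (hbd S hSP).1, ?_⟩
        rw [Finset.card_image_of_injOn (pi1_injOn hn (h0mem S hSP)),
          Finset.erase_eq_of_notMem hS1, (hbd S hSP).2])
      (by
        intro S hS T hT h
        simp only [mem_coe, mem_filter] at hS hT
        have := herase S hS.1 T hT.1 h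
        rwa [Finset.erase_eq_of_notMem hS.2, Finset.erase_eq_of_notMem hT.2] at this)
  · exact Finset.card_le_card_of_injOn (fun S => (S.erase ⟨1, by omega⟩).image (pi1 n hn))
      (by
        intro S hSm
        rw [mem_coe, mem_filter] at hSm ⊢
        obtain ⟨hSP, hS1⟩ := hSm
        rw [not_not] at hS1
        refine ⟨phi_mem hn f f' hf hminor S (hbd S hSP).1, ?_⟩
        rw [Finset.card_image_of_injOn (pi1_injOn hn (h0mem S hSP)),
          Finset.card_erase_of_mem hS1, (hbd S hSP).2])
      (by
        intro S hS T hT h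
        simp only [mem_coe, mem_filter, not_not] at hS hT
        have := herase S hS.1 T hT.1 h
        ext x
        by_cases hx : x = ⟨1, by omega⟩
        · subst hx; simp [hS.2, hT.2]
        · constructor
          · intro hxS
            have : x ∈ T.erase ⟨1, by omega⟩ := by
              rw [← this]; exact mem_erase.mpr ⟨hx, hxS⟩
            exact (mem_erase.mp this).2
          · intro hxT
            have hh : x ∈ S.erase ⟨1, by omega⟩ := by
              rw [this]; exact mem_erase.mpr ⟨hx, hxT⟩
            exact (mem_erase.mp hh).2)

end Aux2

/-- Counting bound: the number of size-`j` boundary sets of coordinate 1 of `f`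
is at most `C(2n-2,j)·μ'(j) + C(2n-2,j-1)·μ'(j-1)`, where `μ'` refers to the
boundary of coordinate 1 of the minor `f'` obtained by identifying
coordinates 1 and 2. -/
theorem boundary_count_minor (n : ℕ) (hn : 0 < n)
    (f : Finset (Fin (2*n)) → Bool) (f' : Finset (Fin (2*n-1)) → Bool)
    (hf : MonotoneB f) (hf' : MonotoneB f')
    (hminor : minorOf f' f (pi1 n hn)) (j : ℕ) (hj1 : 1 ≤ j) (hj2 : j ≤ 2*n-2) :
    ((((boundary f ⟨0, by omega⟩).filter (fun S => S.card = j)).card : ℚ)) ≤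
      ((Nat.choose (2*n-2) j : ℕ) : ℚ) * mu f' ⟨0, by omega⟩ j +
      ((Nat.choose (2*n-2) (j-1) : ℕ) : ℚ) * mu f' ⟨0, by omega⟩ (j-1) := by
  have key : ∀ (c : ℕ) (k : ℕ), k ≤ 2*n-2 →
      ((Nat.choose (2*n-2) k : ℕ) : ℚ) * ((c : ℚ) / (((2*n-1-1).choose k : ℕ) : ℚ)) = c := by
    intro c k hk
    have hm : 2*n-1-1 = 2*n-2 := by omega
    rw [hm]
    have hC : (((2*n-2).choose k : ℕ) : ℚ) ≠ 0 := by
      exact_mod_cast (Nat.choose_pos hk).ne'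
    field_simp
  rw [mu, mu, key _ j hj2, key _ (j-1) (by omega)]
  have := count_le hn f f' hf hminor j hj1
  exact_mod_cast this
end

section
/- Let f : {0,1}^n → {0,1} be a monotone Boolean function with P_{1/L}(f) ≥ 1 − 1/(2L) and f(0,…,0) = 0, where L ≥ 2 and P_p(f) is the probability that f = 1 under the product measure with bias p. Then the threshold function THR_{L,1} (OR on L variables) is a minor of f, i.e., there exists π : [n] → [L] with f(x_{π(1)},…,x_{π(n)}) = THR_{L,1}(x₁,…,x_L) for all x. -/
open Finset

/-- `Pp f p` : the probability that `f = 1` under the `p`-biased product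
measure on `{0,1}^m`. -/
noncomputable def Pp {m : ℕ} (f : Finset (Fin m) → Bool) (p : ℝ) : ℝ :=
  ∑ S : Finset (Fin m), if f S = true then p ^ S.card * (1 - p) ^ (m - S.card) else 0

/-- The threshold function `THR_{L,τ}` : `1` iff the Hamming weight is at least `τ`. -/
def thr (L τ : ℕ) : Finset (Fin L) → Bool := fun S => decide (τ ≤ S.card)



lemma sum_pow_card (m : ℕ) (a b : ℝ) :
    ∑ S : Finset (Fin m), a ^ S.card * b ^ (m - S.card) = (a + b) ^ m := by
  have h := Finset.prod_add (fun _ : Fin m => a) (fun _ : Fin m => b) Finset.univ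
  simp only [Finset.prod_const] at h
  rw [Finset.card_univ, Fintype.card_fin, Finset.powerset_univ] at h
  rw [h]
  apply Finset.sum_congr rfl
  intro t ht
  rw [Finset.card_sdiff_of_subset (Finset.subset_univ t), Finset.card_univ, Fintype.card_fin]


lemma count_fiber (m L : ℕ) (j : Fin L) (S : Finset (Fin m)) :
    (Finset.univ.filter (fun π : Fin m → Fin L =>
      Finset.univ.filter (fun i => π i = j) = S)).card = (L - 1) ^ (m - S.card) := by
  rw [← Fintype.card_subtype]
  have e : {π : Fin m → Fin L // Finset.univ.filter (fun i => π i = j) = S} ≃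
      ({i : Fin m // i ∉ S} → {k : Fin L // k ≠ j}) := by
    apply Equiv.trans (Equiv.subtypeEquivRight (q := fun π => ∀ i, π i = j ↔ i ∈ S) ?_)
    · exact {
        toFun := fun π i => ⟨π.1 i.1, fun h => i.2 ((π.2 i.1).mp h)⟩
        invFun := fun g => ⟨fun i => if h : i ∈ S then j else (g ⟨i, h⟩).1, by
          intro i
          by_cases h : i ∈ S
          · simp [h]
          · simp [h, (g ⟨i, h⟩).2]⟩
        left_inv := fun π => by
          ext i
          by_cases h : i ∈ S
          · simp [h, (π.2 i).mpr h]
          · simp [h]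
        right_inv := fun g => by
          ext i
          simp [i.2] }
    · intro π
      constructor
      · intro h i
        rw [← h]; simp
      · intro h
        ext i; simp [h i]
  rw [Fintype.card_congr e, Fintype.card_fun]
  congr 1
  · rw [Fintype.card_subtype_compl, Fintype.card_fin, Fintype.card_subtype_eq]
  · rw [Fintype.card_subtype_compl, Fintype.card_fin, Fintype.card_coe]

lemma count_fiber' (m L : ℕ) (j : Fin L) (f : Finset (Fin m) → Bool) :
    (Finset.univ.filter (fun π : Fin m → Fin L =>
      f (Finset.univ.filter (fun i => π i = j)) = false)).card =
    ∑ S ∈ Finset.univ.filter (fun S => f S = false), (L - 1) ^ (m - S.card) := by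
  rw [Finset.card_eq_sum_card_fiberwise
    (f := fun π : Fin m → Fin L => Finset.univ.filter (fun i => π i = j))
    (t := Finset.univ.filter (fun S => f S = false))
    (by intro π hπ; simp only [Finset.mem_coe, Finset.mem_filter] at *; exact ⟨Finset.mem_univ _, hπ.2⟩)]
  apply Finset.sum_congr rfl
  intro S hS
  simp only [Finset.mem_filter, Finset.mem_univ, true_and] at hS
  rw [Finset.filter_filter, ← count_fiber m L j S]
  congr 1
  apply Finset.filter_congr
  intro π _
  constructor
  · rintro ⟨_, h⟩; exact h
  · intro h; exact ⟨by rw [h, hS], h⟩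

/-- If `P_{1/L}(f) ≥ 1 - 1/(2L)` and `f(0,…,0) = 0`, then `THR_{L,1}` (the
`L`-variable OR) is a minor of `f`. -/
theorem or_minor (m L : ℕ) (hL : 2 ≤ L) (f : Finset (Fin m) → Bool)
    (hf : MonotoneB f) (h0 : f ∅ = false)
    (hp : 1 - 1 / (2 * (L : ℝ)) ≤ Pp f (1 / (L : ℝ))) :
    ∃ π : Fin m → Fin L, minorOf (thr L 1) f π := by
  classical
  have hL1 : 1 ≤ L := le_trans (by norm_num) hL
  have hL0 : (0:ℝ) < (L:ℝ) := by exact_mod_cast Nat.lt_of_lt_of_le (by norm_num) hL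
  set p : ℝ := 1 / (L:ℝ) with hpdef
  set w : Finset (Fin m) → ℝ := fun S => p ^ S.card * (1 - p) ^ (m - S.card) with hw
  have hsum1 : ∑ S : Finset (Fin m), w S = 1 := by
    rw [hw]
    rw [sum_pow_card]
    norm_num
  have hPp : Pp f p = ∑ S ∈ Finset.univ.filter (fun S => f S = true), w S := by
    rw [Pp, Finset.sum_filter]
  have hsplit := Finset.sum_filter_add_sum_filter_not Finset.univ (fun S => f S = true) w
  have hfalsefilter : Finset.univ.filter (fun S : Finset (Fin m) => ¬ f S = true)
      = Finset.univ.filter (fun S => f S = false) := by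
    simp [Bool.not_eq_true]
  have hfalse : ∑ S ∈ Finset.univ.filter (fun S => f S = false), w S ≤ 1 / (2 * (L:ℝ)) := by
    rw [← hfalsefilter]
    have h := hp; rw [hPp] at h
    linarith [hsplit, hsum1]
  set N0 : ℕ := ∑ S ∈ Finset.univ.filter (fun S => f S = false), (L - 1) ^ (m - S.card)
    with hN0
  have hterm : ∀ S : Finset (Fin m), (((L-1)^(m - S.card) : ℕ) : ℝ) = (L:ℝ)^m * w S := by
    intro S
    have hc : S.card ≤ m := by simpa using Finset.card_le_univ S
    have h1 : (1:ℝ) - p = ((L:ℝ) - 1)/L := by rw [hpdef]; field_simp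
    have hLm : (L:ℝ)^m = (L:ℝ)^S.card * (L:ℝ)^(m - S.card) := by
      rw [← pow_add, Nat.add_sub_cancel' hc]
    rw [hw]
    push_cast [Nat.cast_sub hL1]
    rw [h1, hpdef, hLm, div_pow, div_pow, one_pow]
    have hLne : (L:ℝ) ≠ 0 := ne_of_gt hL0
    field_simp
  have hN0R : (N0:ℝ) ≤ (L:ℝ)^m / (2*L) := by
    have heq : (N0:ℝ) = (L:ℝ)^m * ∑ S ∈ Finset.univ.filter (fun S => f S = false), w S := by
      rw [hN0, Finset.mul_sum]
      push_cast
      exact Finset.sum_congr rfl (fun S _ => by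
        have := hterm S; push_cast at this; exact this)
    rw [heq]
    calc (L:ℝ)^m * ∑ S ∈ Finset.univ.filter (fun S => f S = false), w S
        ≤ (L:ℝ)^m * (1/(2*L)) := by
          apply mul_le_mul_of_nonneg_left hfalse (by positivity)
      _ = (L:ℝ)^m/(2*L) := by ring
  set Bad : Finset (Fin m → Fin L) := Finset.univ.filter
    (fun π => ∃ j : Fin L, f (Finset.univ.filter (fun i => π i = j)) = false) with hBad
  have hBadcard : Bad.card ≤ L * N0 := by
    have hsub : Bad ⊆ Finset.univ.biUnion (fun j : Fin L =>
        Finset.univ.filter (fun π : Fin m → Fin L =>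
          f (Finset.univ.filter (fun i => π i = j)) = false)) := by
      intro π hπ
      rw [hBad, Finset.mem_filter] at hπ
      obtain ⟨_, j, hj⟩ := hπ
      exact Finset.mem_biUnion.mpr ⟨j, Finset.mem_univ j,
        Finset.mem_filter.mpr ⟨Finset.mem_univ _, hj⟩⟩
    calc Bad.card ≤ _ := Finset.card_le_card hsub
      _ ≤ ∑ j : Fin L, (Finset.univ.filter (fun π : Fin m → Fin L =>
          f (Finset.univ.filter (fun i => π i = j)) = false)).card := Finset.card_biUnion_le
      _ = ∑ _j : Fin L, N0 := by
          exact Finset.sum_congr rfl (fun j _ => by rw [count_fiber', hN0])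
      _ = L * N0 := by
          rw [Finset.sum_const, Finset.card_univ, Fintype.card_fin, smul_eq_mul]
  have hlt : Bad.card < Fintype.card (Fin m → Fin L) := by
    have hcard : ((Fintype.card (Fin m → Fin L) : ℕ) : ℝ) = (L:ℝ)^m := by
      simp [Fintype.card_fun]
    have h1 : (Bad.card : ℝ) ≤ (L:ℝ) * N0 := by exact_mod_cast hBadcard
    have h3 : (L:ℝ)^m/2 < (L:ℝ)^m := by
      have : (0:ℝ) < (L:ℝ)^m := by positivity
      linarith
    have hfin : (Bad.card : ℝ) < ((Fintype.card (Fin m → Fin L) : ℕ) : ℝ) := by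
      rw [hcard]
      calc (Bad.card:ℝ) ≤ (L:ℝ) * N0 := h1
        _ ≤ (L:ℝ) * ((L:ℝ)^m/(2*L)) := mul_le_mul_of_nonneg_left hN0R (le_of_lt hL0)
        _ = (L:ℝ)^m/2 := by field_simp
        _ < (L:ℝ)^m := h3
    exact_mod_cast hfin
  obtain ⟨π, hπ⟩ : ∃ π : Fin m → Fin L, π ∉ Bad := by
    by_contra h
    push_neg at h
    have heq : Bad = Finset.univ := Finset.eq_univ_iff_forall.mpr h
    rw [heq, Finset.card_univ] at hlt
    exact lt_irrefl _ hlt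
  have hgood : ∀ j : Fin L, f (Finset.univ.filter (fun i => π i = j)) = true := by
    intro j
    rw [hBad, Finset.mem_filter] at hπ
    by_contra hc
    exact hπ ⟨Finset.mem_univ _, j, by simpa using hc⟩
  refine ⟨π, fun S => ?_⟩
  rcases S.eq_empty_or_nonempty with hS | hS
  · subst hS
    simp [thr, h0]
  · obtain ⟨j, hj⟩ := hS
    have hsub : Finset.univ.filter (fun i => π i = j) ⊆
        Finset.univ.filter (fun i => π i ∈ S) := by
      intro i hi
      simp only [Finset.mem_filter] at *
      exact ⟨hi.1, hi.2 ▸ hj⟩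
    have hft := hf _ _ hsub (hgood j)
    have hcard : 1 ≤ S.card := Finset.card_pos.mpr ⟨j, hj⟩
    simp [thr, hft, hcard]
end
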